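/- arXiv:2201.06756 — 2 statements merged into one kernel-verified Lean document; each statement's English description precedes it below -/
import Mathlib

section
/- Let I be a weakly polymatroidal monomial ideal of K[x_1,...,x_n] generated in a single degree. Then the colon ideal (I : x_1) is also weakly polymatroidal and generated in a single degree. -/
open MvPolynomial

namespace Paper

abbrev R (K : Type) [Field K] (n : ℕ) := MvPolynomial (Fin n) K

noncomputable def mon (K : Type) [Field K] {n : ℕ} (a : Fin n →₀ ℕ) : R K n :=
  monomial a 1

def mdeg {n : ℕ} (a : Fin n →₀ ℕ) : ℕ := a.sum fun _ e => e

def IsSqfree {n : ℕ} (a : Fin n →₀ ℕ) : Prop := ∀ i, a i ≤ 1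

variable {K : Type} [Field K] {n : ℕ}

/-- A monomial ideal: an ideal generated by a set of monomials. -/
def IsMonomialIdeal (I : Ideal (R K n)) : Prop :=
  ∃ S : Set (Fin n →₀ ℕ), I = Ideal.span ((mon K) '' S)

/-- The (exponent vectors of the) minimal monomial generators `G(I)` of a monomial
ideal: monomials in `I` such that no proper divisor lies in `I`. -/
def minGens (I : Ideal (R K n)) : Set (Fin n →₀ ℕ) :=
  { a | mon K a ∈ I ∧ ∀ (b : Fin n →₀ ℕ) (i : Fin n),
      a = b + Finsupp.single i 1 → mon K b ∉ I }

/-- Polymatroidal: a monomial ideal generated in a single degree satisfying the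
exchange property. -/
def IsPolymatroidal (I : Ideal (R K n)) : Prop :=
  IsMonomialIdeal I ∧
  (∃ d, ∀ a ∈ minGens I, mdeg a = d) ∧
  ∀ u ∈ minGens I, ∀ v ∈ minGens I, ∀ i : Fin n, v i < u i →
    ∃ j : Fin n, u j < v j ∧
      ∃ w ∈ minGens I, w + Finsupp.single i 1 = u + Finsupp.single j 1

/-- Matroidal: squarefree polymatroidal. -/
def IsMatroidal (I : Ideal (R K n)) : Prop :=
  IsPolymatroidal I ∧ ∀ a ∈ minGens I, IsSqfree a

/-- Weakly polymatroidal with respect to the variable ordering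
`x_{σ 0} > x_{σ 1} > ... > x_{σ (n-1)}`. -/
def IsWeaklyPolymatroidalWrt (σ : Equiv.Perm (Fin n)) (I : Ideal (R K n)) : Prop :=
  IsMonomialIdeal I ∧
  ∀ u ∈ minGens I, ∀ v ∈ minGens I, ∀ t : Fin n,
    (∀ s, s < t → u (σ s) = v (σ s)) → v (σ t) < u (σ t) →
    ∃ j : Fin n, t < j ∧
      ∃ w : Fin n →₀ ℕ,
        w + Finsupp.single (σ j) 1 = v + Finsupp.single (σ t) 1 ∧ mon K w ∈ I

/-- Weakly polymatroidal with respect to the standard ordering `x_1 > ... > x_n`. -/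
def IsWeaklyPolymatroidal (I : Ideal (R K n)) : Prop :=
  IsWeaklyPolymatroidalWrt (Equiv.refl (Fin n)) I

/-- Vertex splittable monomial ideals (Moradi–Khosh-Ahang). Ideals of
`K[V \ {x}]` are encoded as ideals of `R` whose minimal generators do not
involve the variable `x`. -/
inductive VertexSplittable : Ideal (R K n) → Prop
  | principal (a : Fin n →₀ ℕ) : VertexSplittable (Ideal.span {mon K a})
  | bot : VertexSplittable ⊥
  | top : VertexSplittable ⊤
  | split (x : Fin n) (I₁ I₂ : Ideal (R K n)) :
      VertexSplittable I₁ → VertexSplittable I₂ →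
      (∀ a ∈ minGens I₁, a x = 0) → (∀ a ∈ minGens I₂, a x = 0) →
      I₂ ≤ I₁ →
      minGens (Ideal.span {(X x : R K n)} * I₁ + I₂)
        = minGens (Ideal.span {(X x : R K n)} * I₁) ∪ minGens I₂ →
      minGens (Ideal.span {(X x : R K n)} * I₁) ∩ minGens I₂ = ∅ →
      VertexSplittable (Ideal.span {(X x : R K n)} * I₁ + I₂)

/-- Linear quotients: some ordering of the minimal monomial generators such that
each successive colon ideal is generated by a subset of the variables. -/
def HasLinearQuotients (I : Ideal (R K n)) : Prop :=
  IsMonomialIdeal I ∧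
  ∃ L : List (Fin n →₀ ℕ), L.Nodup ∧ {a | a ∈ L} = minGens I ∧
    ∀ (j : ℕ) (hj : j < L.length), 0 < j →
      ∃ S : Set (Fin n),
        Submodule.colon (Ideal.span ((mon K) '' {a | a ∈ L.take j}))
            (Ideal.span {mon K (L.get ⟨j, hj⟩)})
          = Ideal.span ((fun i => (X i : R K n)) '' S)


/-- A (possibly void) abstract simplicial complex on the vertex set `Fin n`. -/
structure SComplex (n : ℕ) where
  faces : Finset (Finset (Fin n))
  down : ∀ F ∈ faces, ∀ G ⊆ F, G ∈ faces

variable {n : ℕ}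

def SComplex.IsFacet (Δ : SComplex n) (F : Finset (Fin n)) : Prop :=
  F ∈ Δ.faces ∧ ∀ G ∈ Δ.faces, F ⊆ G → G = F

/-- Deletion of a vertex. -/
def SComplex.del (Δ : SComplex n) (x : Fin n) : SComplex n where
  faces := Δ.faces.filter (fun F => x ∉ F)
  down := by
    intro F hF G hG
    simp only [Finset.mem_filter] at *
    exact ⟨Δ.down F hF.1 G hG, fun hx => hF.2 (hG hx)⟩

/-- Link of a vertex. -/
def SComplex.lk (Δ : SComplex n) (x : Fin n) : SComplex n where
  faces := Δ.faces.filter (fun F => x ∉ F ∧ insert x F ∈ Δ.faces)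
  down := by
    intro F hF G hG
    simp only [Finset.mem_filter] at *
    refine ⟨Δ.down F hF.1 G hG, fun hx => hF.2.1 (hG hx), ?_⟩
    exact Δ.down _ hF.2.2 _ (Finset.insert_subset_insert x hG)

/-- Vertex decomposability, defined recursively via shedding vertices. -/
inductive VertexDecomposable : SComplex n → Prop
  | simplex (Δ : SComplex n) (F : Finset (Fin n)) :
      Δ.faces = F.powerset → VertexDecomposable Δ
  | shed (Δ : SComplex n) (x : Fin n) :
      VertexDecomposable (Δ.del x) → VertexDecomposable (Δ.lk x) →
      (∀ F ∈ (Δ.lk x).faces, ¬ (Δ.del x).IsFacet F) →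
      VertexDecomposable Δ

/-- Shellability (non-pure, Björner–Wachs). -/
def SComplex.Shellable (Δ : SComplex n) : Prop :=
  ∃ L : List (Finset (Fin n)), L.Nodup ∧ {F | F ∈ L} = {F | Δ.IsFacet F} ∧
    ∀ (i j : ℕ) (hi : i < L.length) (hj : j < L.length), i < j →
      ∃ x ∈ L.get ⟨j, hj⟩ \ L.get ⟨i, hi⟩,
        ∃ (l : ℕ) (hl : l < j),
          L.get ⟨j, hj⟩ \ L.get ⟨l, Nat.lt_trans hl hj⟩ = {x}

/-- The Alexander dual complex `Δ^∨ = { V \ A : A ∉ Δ }`. -/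
noncomputable def SComplex.dual (Δ : SComplex n) : SComplex n where
  faces := Finset.univ.filter (fun B => Bᶜ ∉ Δ.faces)
  down := by
    classical
    intro F hF G hG
    simp only [Finset.mem_filter, Finset.mem_univ, true_and] at *
    intro hGc
    exact hF (Δ.down _ hGc _ (Finset.compl_subset_compl.2 hG))


/-- The squarefree exponent vector of a set of vertices. -/
noncomputable def sqmon {n : ℕ} (F : Finset (Fin n)) : Fin n →₀ ℕ :=
  ∑ i ∈ F, Finsupp.single i 1

/-- The Stanley–Reisner ideal of `Δ`. -/
noncomputable def srIdeal (K : Type) [Field K] {n : ℕ} (Δ : SComplex n) :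
    Ideal (MvPolynomial (Fin n) K) :=
  Ideal.span ((fun F => mon K (sqmon F)) '' {F | F ∉ Δ.faces})


section CM
variable (A : Type) [CommRing A]

/-- Krull dimension of a module: the dimension of `A / ann M`. -/
noncomputable def moduleDim (M : Type) [AddCommGroup M] [Module A M] : WithBot ℕ∞ :=
  ringKrullDim (A ⧸ Submodule.annihilator (⊤ : Submodule A M))

/-- `rs` is an `M`-regular sequence: each entry is a nonzerodivisor on the quotient
of `M` by the previous entries. -/
def IsRegSeq (M : Type) [AddCommGroup M] [Module A M] (rs : List A) : Prop :=
  ∀ (i : ℕ) (hi : i < rs.length),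
    ∀ m : M ⧸ (Ideal.span {r | r ∈ rs.take i} • (⊤ : Submodule A M)),
      rs.get ⟨i, hi⟩ • m = 0 → m = 0

/-- Depth of `M` with respect to the ideal `J`: the supremum of lengths of
`M`-regular sequences contained in `J`. -/
noncomputable def moduleDepth (J : Ideal A) (M : Type) [AddCommGroup M] [Module A M] : ℕ :=
  sSup {k | ∃ rs : List A, rs.length = k ∧ (∀ r ∈ rs, r ∈ J) ∧ IsRegSeq A M rs}

/-- Cohen–Macaulay module (with respect to the ideal `J` playing the role of the
maximal ideal): zero, or depth equals Krull dimension. -/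
def IsCMmod (J : Ideal A) (M : Type) [AddCommGroup M] [Module A M] : Prop :=
  Subsingleton M ∨ moduleDim A M = ((moduleDepth A J M : ℕ∞) : WithBot ℕ∞)

/-- Sequentially Cohen–Macaulay module: a filtration `0 = M₀ ⊂ ... ⊂ M_r = N` with
Cohen–Macaulay quotients of strictly increasing Krull dimension. -/
def IsSeqCM (J : Ideal A) (N : Type) [AddCommGroup N] [Module A N] : Prop :=
  ∃ (r : ℕ) (c : Fin (r + 1) → Submodule A N),
    c 0 = ⊥ ∧ c (Fin.last r) = ⊤ ∧
    (∀ i : Fin r, c i.castSucc ≤ c i.succ) ∧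
    (∀ i : Fin r,
      IsCMmod A J (↥(c i.succ) ⧸ (Submodule.comap (c i.succ).subtype (c i.castSucc)))) ∧
    (∀ i j : Fin r, i < j →
      moduleDim A (↥(c i.succ) ⧸ (Submodule.comap (c i.succ).subtype (c i.castSucc)))
        < moduleDim A (↥(c j.succ) ⧸ (Submodule.comap (c j.succ).subtype (c j.castSucc))))

end CM

variable {K : Type} [Field K] {n : ℕ}

/-- The irrelevant maximal ideal `(x_1, ..., x_n)`. -/
noncomputable def maxIdeal (K : Type) [Field K] (n : ℕ) : Ideal (MvPolynomial (Fin n) K) :=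
  Ideal.span (Set.range (X : Fin n → MvPolynomial (Fin n) K))

section Res

/-- The differential of a free complex given by a matrix of polynomials. -/
noncomputable def resDiff (β : ℕ → ℕ)
    (Mt : (i : ℕ) → Fin (β (i + 1)) → Fin (β i) → MvPolynomial (Fin n) K) (i : ℕ) :
    (Fin (β (i + 1)) →₀ MvPolynomial (Fin n) K) →ₗ[MvPolynomial (Fin n) K]
      (Fin (β i) →₀ MvPolynomial (Fin n) K) :=
  Finsupp.lsum (MvPolynomial (Fin n) K) fun j =>
    LinearMap.toSpanSingleton (MvPolynomial (Fin n) K) _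
      (∑ k : Fin (β i), Finsupp.single k (Mt i j k))

/-- The augmentation map sending basis elements to the generators `g`. -/
noncomputable def resAug (β₀ : ℕ) (g : Fin β₀ → MvPolynomial (Fin n) K) :
    (Fin β₀ →₀ MvPolynomial (Fin n) K) →ₗ[MvPolynomial (Fin n) K] MvPolynomial (Fin n) K :=
  Finsupp.lsum (MvPolynomial (Fin n) K) fun j =>
    LinearMap.toSpanSingleton (MvPolynomial (Fin n) K) _ (g j)

/-- A graded free resolution of the ideal `I`, recorded by Betti numbers `β`,
degree shifts `dg`, homogeneous generators `g` of `I`, and matrices `Mt` of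
homogeneous entries, which is exact. -/
structure GradedRes (I : Ideal (MvPolynomial (Fin n) K)) where
  β : ℕ → ℕ
  dg : (i : ℕ) → Fin (β i) → ℕ
  g : Fin (β 0) → MvPolynomial (Fin n) K
  hg : ∀ j, (g j).IsHomogeneous (dg 0 j)
  Mt : (i : ℕ) → Fin (β (i + 1)) → Fin (β i) → MvPolynomial (Fin n) K
  hMt : ∀ i j k, Mt i j k = 0 ∨
    (dg i k ≤ dg (i + 1) j ∧ (Mt i j k).IsHomogeneous (dg (i + 1) j - dg i k))
  hrange : LinearMap.range (resAug (β 0) g) = I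
  hexact0 : LinearMap.ker (resAug (β 0) g) = LinearMap.range (resDiff β Mt 0)
  hexact : ∀ i, LinearMap.ker (resDiff β Mt i) = LinearMap.range (resDiff β Mt (i + 1))

/-- Castelnuovo–Mumford regularity, as the infimum over all graded free
resolutions of the maximum of `(shift) - (homological degree)`. -/
noncomputable def reg (I : Ideal (MvPolynomial (Fin n) K)) : ℕ∞ :=
  sInf { r : ℕ∞ | ∃ Res : GradedRes I,
    ∀ (i : ℕ) (j : Fin (Res.β i)), (Res.dg i j : ℕ∞) ≤ r + i }

/-- `I` has a `d`-linear resolution. -/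
def HasLinearRes (I : Ideal (MvPolynomial (Fin n) K)) (d : ℕ) : Prop :=
  ∃ Res : GradedRes I, ∀ (i : ℕ) (j : Fin (Res.β i)), Res.dg i j = d + i

/-- The ideal generated by the degree-`d` elements of `I`. -/
noncomputable def compIdeal (I : Ideal (MvPolynomial (Fin n) K)) (d : ℕ) : Ideal (MvPolynomial (Fin n) K) :=
  Ideal.span { f | f ∈ I ∧ f.IsHomogeneous d }

/-- Componentwise linear ideal. -/
def ComponentwiseLinear (I : Ideal (MvPolynomial (Fin n) K)) : Prop :=
  ∀ d, compIdeal I d = ⊥ ∨ HasLinearRes (compIdeal I d) d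

end Res


section Stmt13Aux

variable {K : Type} [Field K] {n : ℕ}

lemma mon_mul_mon (a b : Fin n →₀ ℕ) : mon K a * mon K b = mon K (a + b) := by
  simp [mon, monomial_mul]

lemma mdeg_add (a b : Fin n →₀ ℕ) : mdeg (a + b) = mdeg a + mdeg b :=
  Finsupp.sum_add_index' (fun _ => rfl) (fun _ _ _ => rfl)

lemma mdeg_single (i : Fin n) : mdeg (Finsupp.single i 1) = 1 :=
  Finsupp.sum_single_index rfl

lemma mon_dvd_mem {I : Ideal (R K n)} {a b : Fin n →₀ ℕ} (h : mon K a ∈ I)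
    (hab : a ≤ b) : mon K b ∈ I := by
  have : mon K (b - a) * mon K a = mon K b := by
    rw [mon_mul_mon, tsub_add_cancel_of_le hab]
  rw [← this]
  exact Ideal.mul_mem_left _ _ h

/-- Every monomial in an ideal is divisible by a minimal generator. -/
lemma exists_minGen_le {I : Ideal (R K n)} {a : Fin n →₀ ℕ} (ha : mon K a ∈ I) :
    ∃ u ∈ minGens I, u ≤ a := by
  obtain ⟨d, hd⟩ : ∃ d, mdeg a = d := ⟨_, rfl⟩
  induction d using Nat.strong_induction_on generalizing a with
  | _ d ih =>
    by_cases hmin : a ∈ minGens I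
    · exact ⟨a, hmin, le_refl a⟩
    · simp only [minGens, Set.mem_setOf_eq, not_and, not_forall, not_not] at hmin
      obtain ⟨b, i, hab, hb⟩ := hmin ha
      have hdb : mdeg b < d := by
        have := mdeg_add b (Finsupp.single i 1)
        rw [← hab, hd, mdeg_single] at this
        omega
      obtain ⟨u, hu, hub⟩ := ih (mdeg b) hdb hb rfl
      exact ⟨u, hu, hub.trans (by rw [hab]; exact le_add_of_nonneg_right zero_le)⟩

lemma mem_monomialIdeal_iff {I : Ideal (R K n)} (hI : IsMonomialIdeal I)
    (f : R K n) : f ∈ I ↔ ∀ m ∈ f.support, mon K m ∈ I := by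
  obtain ⟨S, rfl⟩ := hI
  have himg : (mon K (n := n)) '' S = (fun s => monomial s (1 : K)) '' S := rfl
  rw [himg, mem_ideal_span_monomial_image]
  constructor
  · rintro H m hm
    obtain ⟨s, hs, hsm⟩ := H m hm
    exact mon_dvd_mem (Ideal.subset_span ⟨s, hs, rfl⟩) hsm
  · intro H m hm
    have h2 := H m hm
    rw [mem_ideal_span_monomial_image] at h2
    have hsup : m ∈ (mon K m).support := by
      simp [mon, support_monomial]
    exact h2 m hsup

lemma X_eq_mon (z : Fin n) : (X z : R K n) = mon K (Finsupp.single z 1) := rfl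

lemma mem_colon_X_iff (I : Ideal (R K n)) (z : Fin n) (f : R K n) :
    f ∈ Submodule.colon I (Ideal.span {(X z : R K n)}) ↔ (X z : R K n) * f ∈ I := by
  rw [Ideal.mem_colon_span_singleton, mul_comm]

lemma X_mul_mon (z : Fin n) (a : Fin n →₀ ℕ) :
    (X z : R K n) * mon K a = mon K (Finsupp.single z 1 + a) := by
  rw [X_eq_mon, mon_mul_mon]

lemma mon_mem_colon_iff (I : Ideal (R K n)) (z : Fin n) (a : Fin n →₀ ℕ) :
    mon K a ∈ Submodule.colon I (Ideal.span {(X z : R K n)}) ↔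
      mon K (Finsupp.single z 1 + a) ∈ I := by
  rw [mem_colon_X_iff, X_mul_mon]

lemma colon_isMonomialIdeal (I : Ideal (R K n)) (hI : IsMonomialIdeal I) (z : Fin n) :
    IsMonomialIdeal (Submodule.colon I (Ideal.span {(X z : R K n)})) := by
  set J := Submodule.colon I (Ideal.span {(X z : R K n)}) with hJ
  refine ⟨{a | mon K a ∈ J}, le_antisymm ?_ ?_⟩
  · intro f hf
    have hXf : (X z : R K n) * f ∈ I := (mem_colon_X_iff I z f).1 hf
    have hmem : f ∈ Ideal.span ((fun s => monomial s (1 : K)) '' {a | mon K a ∈ J}) := by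
      rw [mem_ideal_span_monomial_image]
      intro m hm
      refine ⟨m, ?_, le_refl m⟩
      rw [Set.mem_setOf_eq, mon_mem_colon_iff]
      have hsup : Finsupp.single z 1 + m ∈ ((X z : R K n) * f).support := by
        rw [mem_support_iff, coeff_X_mul]
        exact mem_support_iff.1 hm
      exact (mem_monomialIdeal_iff hI _).1 hXf _ hsup
    exact hmem
  · rw [Ideal.span_le]
    rintro _ ⟨a, ha, rfl⟩
    exact ha

lemma stmt13_key (z : Fin n) (hzmin : ∀ t : Fin n, z ≤ t) (I : Ideal (R K n))
    (h : IsWeaklyPolymatroidal I)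
    (hd : ∃ d, ∀ a ∈ minGens I, mdeg a = d) :
    IsWeaklyPolymatroidal
        (Submodule.colon I (Ideal.span {(X z : R K n)})) ∧
      ∃ d, ∀ a ∈ minGens (Submodule.colon I (Ideal.span {(X z : R K n)})),
        mdeg a = d := by
  classical
  obtain ⟨hmono, hex⟩ := h
  obtain ⟨d, hdeg⟩ := hd
  set J := Submodule.colon I (Ideal.span {(X z : R K n)}) with hJdef
  have hJmono : IsMonomialIdeal J := colon_isMonomialIdeal I hmono z
  have hmemJ : ∀ a : Fin n →₀ ℕ, mon K a ∈ J ↔ mon K (Finsupp.single z 1 + a) ∈ I :=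
    fun a => mon_mem_colon_iff I z a
  have hIJ : I ≤ J := fun f hf => (mem_colon_X_iff I z f).2 (Ideal.mul_mem_left _ _ hf)
  by_cases hc : ∃ u ∈ minGens I, 0 < u z
  · -- Case (b): some minimal generator involves `x_z`.
    obtain ⟨w0, hw0, hw0z⟩ := hc
    -- every minimal generator of J is u - e_z for a minimal generator u of I with u z > 0
    have hchar : ∀ a ∈ minGens J, ∃ u ∈ minGens I, 0 < u z ∧ a + Finsupp.single z 1 = u := by
      intro a ha
      have haJ : mon K (Finsupp.single z 1 + a) ∈ I := (hmemJ a).1 ha.1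
      obtain ⟨u, hu, hule⟩ := exists_minGen_le haJ
      have hule' : ∀ i, u i ≤ Finsupp.single z 1 i + a i := by
        intro i
        have := Finsupp.le_def.1 hule i
        simpa [Finsupp.add_apply] using this
      by_cases huz : 0 < u z
      · have he0u : Finsupp.single z 1 ≤ u := Finsupp.single_le_iff.2 huz
        have hce : (u - Finsupp.single z 1) + Finsupp.single z 1 = u :=
          tsub_add_cancel_of_le he0u
        have hca : ∀ i, u i - Finsupp.single z 1 i ≤ a i := by
          intro i
          have h2 := hule' i
          omega
        have hcJ : mon K (u - Finsupp.single z 1) ∈ J := by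
          have hcomm : Finsupp.single z 1 + (u - Finsupp.single z 1) = u :=
            (add_comm _ _).trans hce
          rw [hmemJ, hcomm]
          exact hu.1
        by_cases hca' : u - Finsupp.single z 1 = a
        · exact ⟨u, hu, huz, by rw [← hca', hce]⟩
        · exfalso
          obtain ⟨i, hi⟩ : ∃ i, u i - Finsupp.single z 1 i < a i := by
            by_contra hno
            push_neg at hno
            refine hca' (Finsupp.ext fun i => ?_)
            rw [Finsupp.tsub_apply]
            exact le_antisymm (hca i) (hno i)
          have hbeq : a = (a - Finsupp.single i 1) + Finsupp.single i 1 :=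
            (tsub_add_cancel_of_le (Finsupp.single_le_iff.2 (by omega))).symm
          refine ha.2 (a - Finsupp.single i 1) i hbeq ?_
          refine mon_dvd_mem hcJ (Finsupp.le_def.2 fun j => ?_)
          rw [Finsupp.tsub_apply, Finsupp.tsub_apply]
          have h6 := hca j
          rcases eq_or_ne j i with rfl | hji
          · rw [Finsupp.single_eq_same]
            omega
          · rw [Finsupp.single_eq_of_ne' (Ne.symm hji)]
            omega
      · -- u z = 0: contradiction using the exchange property with w0
        exfalso
        have huz0 : u z = 0 := by omega
        have hua : ∀ i, u i ≤ a i := by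
          intro i
          have h2 := hule' i
          rcases eq_or_ne i z with rfl | hiz
          · omega
          · rw [Finsupp.single_eq_of_ne' (Ne.symm hiz)] at h2
            omega
        obtain ⟨j, hzj, w, hweq, hwI⟩ :=
          hex w0 hw0 u hu z (fun s hs => absurd hs (not_lt.2 (hzmin s)))
            (by simp only [Equiv.refl_apply]; omega)
        simp only [Equiv.refl_apply] at hweq
        have hjz : j ≠ z := ne_of_gt hzj
        have hwapp : ∀ i, w i + Finsupp.single j 1 i = u i + Finsupp.single z 1 i := by
          intro i
          have := DFunLike.congr_fun hweq i
          simpa [Finsupp.add_apply] using this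
        have huj : 0 < u j := by
          have h4 := hwapp j
          rw [Finsupp.single_eq_same, Finsupp.single_eq_of_ne' (Ne.symm hjz)] at h4
          omega
        have hbeq : a = (a - Finsupp.single j 1) + Finsupp.single j 1 :=
          (tsub_add_cancel_of_le (Finsupp.single_le_iff.2
            (by have := hua j; omega))).symm
        refine ha.2 (a - Finsupp.single j 1) j hbeq ?_
        rw [hmemJ]
        refine mon_dvd_mem hwI (Finsupp.le_def.2 fun i => ?_)
        rw [Finsupp.add_apply, Finsupp.tsub_apply]
        have h4 := hwapp i
        have h5 := hua i
        rcases eq_or_ne i j with rfl | hij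
        · rw [Finsupp.single_eq_same] at h4 ⊢
          rw [Finsupp.single_eq_of_ne' (Ne.symm hjz)] at h4
          rw [Finsupp.single_eq_of_ne' (Ne.symm hjz)]
          omega
        · rw [Finsupp.single_eq_of_ne' (Ne.symm hij)] at h4 ⊢
          rcases eq_or_ne i z with rfl | hiz
          · rw [Finsupp.single_eq_same] at h4 ⊢
            omega
          · rw [Finsupp.single_eq_of_ne' (Ne.symm hiz)] at h4 ⊢
            omega
    refine ⟨⟨hJmono, ?_⟩, d - 1, fun a ha => ?_⟩
    · -- exchange property for J
      intro u' hu' v' hv' t hpre hlt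
      simp only [Equiv.refl_apply] at hpre hlt ⊢
      obtain ⟨u, hu, huz, hue⟩ := hchar u' hu'
      obtain ⟨v, hv, hvz, hve⟩ := hchar v' hv'
      have happ : ∀ (x' x : Fin n →₀ ℕ), x' + Finsupp.single z 1 = x →
          ∀ i, x i = x' i + Finsupp.single z 1 i := by
        intro x' x hx i
        rw [← hx, Finsupp.add_apply]
      obtain ⟨j, htj, w, hweq, hwI⟩ := hex u hu v hv t
        (fun s hs => by
          have h1 := happ _ _ hue s
          have h2 := happ _ _ hve s
          simp only [Equiv.refl_apply]
          rw [h1, h2, hpre s hs])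
        (by
          have h1 := happ _ _ hue t
          have h2 := happ _ _ hve t
          simp only [Equiv.refl_apply]
          rw [h1, h2]
          omega)
      simp only [Equiv.refl_apply] at hweq
      have hjz : j ≠ z := ne_of_gt (lt_of_le_of_lt (hzmin t) htj)
      have hwz : 0 < w z := by
        have h4 := DFunLike.congr_fun hweq z
        simp only [Finsupp.add_apply] at h4
        rw [Finsupp.single_eq_of_ne' hjz] at h4
        have h2 := happ _ _ hve z
        rw [Finsupp.single_eq_same] at h2
        omega
      have hwe : (w - Finsupp.single z 1) + Finsupp.single z 1 = w :=
        tsub_add_cancel_of_le (Finsupp.single_le_iff.2 hwz)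
      refine ⟨j, htj, w - Finsupp.single z 1, ?_, ?_⟩
      · apply add_right_cancel (b := Finsupp.single z 1)
        rw [add_right_comm, hwe, hweq, ← hve, add_right_comm]
      · exact (hmemJ _).2 (by
          rw [(add_comm (Finsupp.single z 1) (w - Finsupp.single z 1)).trans hwe]
          exact hwI)
    · -- degrees in J
      obtain ⟨u, hu, huz, hue⟩ := hchar a ha
      have h1 : mdeg a + 1 = d := by
        have h0 := hdeg u hu
        rw [← hue, mdeg_add, mdeg_single] at h0
        exact h0
      omega
  · -- Case (a): no minimal generator involves `x_z`, so J = I.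
    push_neg at hc
    have hJI : J = I := by
      refine le_antisymm ?_ hIJ
      intro f hf
      rw [mem_monomialIdeal_iff hmono]
      intro m hm
      have hfm : mon K (Finsupp.single z 1 + m) ∈ I :=
        (hmemJ m).1 ((mem_monomialIdeal_iff hJmono f).1 hf m hm)
      obtain ⟨u, hu, hule⟩ := exists_minGen_le hfm
      refine mon_dvd_mem hu.1 (Finsupp.le_def.2 fun i => ?_)
      have h1 := Finsupp.le_def.1 hule i
      rw [Finsupp.add_apply] at h1
      have h2 := hc u hu
      rcases eq_or_ne i z with rfl | hiz
      · omega
      · rw [Finsupp.single_eq_of_ne' (Ne.symm hiz)] at h1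
        omega
    rw [hJI]
    exact ⟨⟨hmono, hex⟩, d, hdeg⟩

end Stmt13Aux

/-- If `I` is weakly polymatroidal (w.r.t. `x_1 > ... > x_n`) and
generated in a single degree, then `(I : x_1)` is weakly polymatroidal and
generated in a single degree. -/
theorem stmt13 {K : Type} [Field K] {n : ℕ} (hn : 0 < n) (I : Ideal (R K n))
    (h : IsWeaklyPolymatroidal I)
    (hd : ∃ d, ∀ a ∈ minGens I, mdeg a = d) :
    IsWeaklyPolymatroidal
        (Submodule.colon I (Ideal.span {(X ⟨0, hn⟩ : R K n)})) ∧
      ∃ d, ∀ a ∈ minGens (Submodule.colon I (Ideal.span {(X ⟨0, hn⟩ : R K n)})),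
        mdeg a = d :=
  stmt13_key ⟨0, hn⟩ (fun t => by simp [Fin.le_def]) I h hd

end Paper
end

section
/- The ideal I = (x_1x_2, x_2x_3, x_3x_4) in K[x_1,x_2,x_3,x_4] is vertex splittable (via the splitting I = x_2(x_1,x_3) + (x_3x_4)) but is not a matroidal ideal. -/
open MvPolynomial

namespace Paper

variable {K : Type} [Field K] {n : ℕ}

variable {n : ℕ}

variable {K : Type} [Field K] {n : ℕ}

section Aux18

variable {K : Type} [Field K] {n : ℕ}

lemma mon_mem_span_iff {S : Set (Fin n →₀ ℕ)} {a : Fin n →₀ ℕ} :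
    mon K a ∈ Ideal.span ((mon K) '' S) ↔ ∃ s ∈ S, s ≤ a := by
  have h : (mon K) '' S = (fun s => monomial s (1 : K)) '' S := rfl
  rw [h, mon, mem_ideal_span_monomial_image]
  simp [support_monomial]

lemma not_le_of_pt {a b : Fin n →₀ ℕ} (i : Fin n) (h : b i < a i) : ¬ a ≤ b :=
  fun hle => absurd (Finsupp.le_def.mp hle i) (not_le.mpr h)

lemma minGens_antichain {S : Set (Fin n →₀ ℕ)}
    (hS : ∀ s ∈ S, ∀ t ∈ S, s ≤ t → s = t) :
    minGens (Ideal.span ((mon K) '' S)) = S := by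
  ext a
  constructor
  · rintro ⟨hmem, hmin⟩
    rw [mon_mem_span_iff] at hmem
    obtain ⟨s, hs, hle⟩ := hmem
    rcases eq_or_ne s a with rfl | hne
    · exact hs
    · exfalso
      have hex : ∃ i, s i < a i := by
        by_contra h
        push_neg at h
        exact hne (le_antisymm hle (Finsupp.le_def.mpr h))
      obtain ⟨i, hi⟩ := hex
      have hsingle : Finsupp.single i 1 ≤ a := Finsupp.single_le_iff.mpr (by omega)
      refine hmin (a - Finsupp.single i 1) i (tsub_add_cancel_of_le hsingle).symm ?_
      rw [mon_mem_span_iff]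
      refine ⟨s, hs, Finsupp.le_def.mpr fun j => ?_⟩
      rw [Finsupp.tsub_apply]
      rcases eq_or_ne j i with rfl | hj
      · rw [Finsupp.single_eq_same]
        omega
      · rw [Finsupp.single_eq_of_ne' (Ne.symm hj)]
        simpa using Finsupp.le_def.mp hle j
  · intro ha
    refine ⟨mon_mem_span_iff.mpr ⟨a, ha, le_refl a⟩, ?_⟩
    intro b i hab hmem
    rw [mon_mem_span_iff] at hmem
    obtain ⟨s, hs, hsb⟩ := hmem
    have h1 : s ≤ a := hab ▸ hsb.trans le_self_add
    have h2 : s = a := hS s hs a ha h1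
    have h3 : s i ≤ b i := Finsupp.le_def.mp hsb i
    have h4 : a i = b i + 1 := by
      rw [hab, Finsupp.add_apply, Finsupp.single_eq_same]
    rw [h2] at h3
    omega

/-- shorthand for exponent vectors in `Fin 4`. -/
noncomputable def ee (i : Fin 4) : Fin 4 →₀ ℕ := Finsupp.single i 1

lemma ee_apply (i j : Fin 4) : ee i j = if i = j then 1 else 0 := Finsupp.single_apply

lemma mon_add (a b : Fin n →₀ ℕ) : mon K (a + b) = mon K a * mon K b := by
  simp [mon, monomial_mul]

lemma mon_single (i : Fin n) : mon K (Finsupp.single i 1) = X i := by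
  simp [mon, X]

lemma mon_ee (i : Fin 4) : mon K (ee i) = X i := mon_single i

end Aux18

/-- `I = (x₁x₂, x₂x₃, x₃x₄)` is vertex splittable but not matroidal. -/
theorem stmt18 (K : Type) [Field K] :
    VertexSplittable (Ideal.span {(X 0 * X 1 : R K 4), X 1 * X 2, X 2 * X 3}) ∧
    ¬ IsMatroidal (Ideal.span {(X 0 * X 1 : R K 4), X 1 * X 2, X 2 * X 3}) := by
  classical
  -- exponent sets
  set A : Set (Fin 4 →₀ ℕ) := {ee 0 + ee 1, ee 1 + ee 2, ee 2 + ee 3} with hA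
  set B : Set (Fin 4 →₀ ℕ) := {ee 0, ee 2} with hB
  -- the target ideal as a monomial ideal
  have hI : (Ideal.span {(X 0 * X 1 : R K 4), X 1 * X 2, X 2 * X 3}) =
      Ideal.span ((mon K) '' A) := by
    rw [hA, Set.image_insert_eq, Set.image_insert_eq, Set.image_singleton]
    simp [ee, mon_add, mon_single]
  have hI₁ : (Ideal.span ((mon K) '' B) : Ideal (R K 4)) =
      Ideal.span {(X 0 : R K 4)} * ⊤ + Ideal.span {mon K (ee 2)} := by
    rw [Ideal.mul_top, hB, Set.image_insert_eq, Set.image_singleton, mon_ee,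
      Ideal.span_insert, Submodule.add_eq_sup]
  -- minGens computations
  have hmA : minGens (Ideal.span ((mon K) '' A) : Ideal (R K 4)) = A := by
    apply minGens_antichain
    intro s hs t ht hle
    simp only [hA, Set.mem_insert_iff, Set.mem_singleton_iff] at hs ht
    rcases hs with rfl | rfl | rfl <;> rcases ht with rfl | rfl | rfl <;>
      first
        | rfl
        | (refine absurd hle (not_le_of_pt 0 ?_); simp [ee_apply]; done)
        | (refine absurd hle (not_le_of_pt 1 ?_); simp [ee_apply]; done)
        | (refine absurd hle (not_le_of_pt 2 ?_); simp [ee_apply]; done)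
        | (refine absurd hle (not_le_of_pt 3 ?_); simp [ee_apply]; done)
  have hmB : minGens (Ideal.span ((mon K) '' B) : Ideal (R K 4)) = B := by
    apply minGens_antichain
    intro s hs t ht hle
    simp only [hB, Set.mem_insert_iff, Set.mem_singleton_iff] at hs ht
    rcases hs with rfl | rfl <;> rcases ht with rfl | rfl <;>
      first
        | rfl
        | (refine absurd hle (not_le_of_pt 0 ?_); simp [ee_apply]; done)
        | (refine absurd hle (not_le_of_pt 2 ?_); simp [ee_apply]; done)
  have hsingle_min : ∀ a : Fin 4 →₀ ℕ,
      minGens (Ideal.span {mon K a} : Ideal (R K 4)) = {a} := by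
    intro a
    have : ({mon K a} : Set (R K 4)) = (mon K) '' {a} := by simp
    rw [this]
    exact minGens_antichain (by rintro s rfl t rfl _; rfl)
  have hmtop : minGens (⊤ : Ideal (R K 4)) = {0} := by
    have h1 : (⊤ : Ideal (R K 4)) = Ideal.span {mon K 0} := by
      rw [show (mon K (0 : Fin 4 →₀ ℕ)) = 1 from by simp [mon], Ideal.span_singleton_one]
    rw [h1, hsingle_min]
  -- the product ideal
  have hD : Ideal.span {(X 1 : R K 4)} * Ideal.span ((mon K) '' B)
      = Ideal.span ((mon K) '' ({ee 0 + ee 1, ee 1 + ee 2} : Set (Fin 4 →₀ ℕ))) := by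
    rw [hB, Set.image_insert_eq, Set.image_singleton, Ideal.span_insert, Ideal.mul_sup,
      Ideal.span_singleton_mul_span_singleton,
      Set.image_insert_eq, Set.image_singleton, Ideal.span_insert]
    congr 1
    · rw [mon_add, mon_ee, mon_ee, mul_comm]
    · rw [Ideal.span_singleton_mul_span_singleton, mon_add, mon_ee, mon_ee, mul_comm]
  have hmD : minGens (Ideal.span {(X 1 : R K 4)} * Ideal.span ((mon K) '' B))
      = ({ee 0 + ee 1, ee 1 + ee 2} : Set (Fin 4 →₀ ℕ)) := by
    rw [hD]
    apply minGens_antichain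
    intro s hs t ht hle
    simp only [Set.mem_insert_iff, Set.mem_singleton_iff] at hs ht
    rcases hs with rfl | rfl <;> rcases ht with rfl | rfl <;>
      first
        | rfl
        | (refine absurd hle (not_le_of_pt 0 ?_); simp [ee_apply]; done)
        | (refine absurd hle (not_le_of_pt 2 ?_); simp [ee_apply]; done)
  -- sum decomposition
  have hsum : Ideal.span {(X 1 : R K 4)} * Ideal.span ((mon K) '' B)
      + Ideal.span {mon K (ee 2 + ee 3)} = Ideal.span ((mon K) '' A) := by
    rw [hD, Submodule.add_eq_sup, ← Ideal.span_union,
      show ({mon K (ee 2 + ee 3)} : Set (R K 4)) = (mon K) '' {ee 2 + ee 3} from by simp,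
      ← Set.image_union]
    have hDC : ({ee 0 + ee 1, ee 1 + ee 2} ∪ {ee 2 + ee 3} : Set (Fin 4 →₀ ℕ)) = A := by
      rw [hA]
      ext x
      simp only [Set.mem_union, Set.mem_insert_iff, Set.mem_singleton_iff]
      tauto
    rw [hDC]
  -- vertex splittability of I₁ = (x0, x2)
  have hvsB : VertexSplittable (Ideal.span ((mon K) '' B) : Ideal (R K 4)) := by
    rw [hI₁]
    refine VertexSplittable.split 0 ⊤ (Ideal.span {mon K (ee 2)})
      VertexSplittable.top (VertexSplittable.principal (ee 2)) ?_ ?_ le_top ?_ ?_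
    · intro a ha; rw [hmtop] at ha; simp at ha; simp [ha]
    · intro a ha; rw [hsingle_min] at ha; simp at ha; simp [ha, ee_apply]
    · rw [← hI₁, hmB, Ideal.mul_top, ← mon_ee 0, hsingle_min, hsingle_min, hB]
      rw [Set.singleton_union]
    · rw [Ideal.mul_top, ← mon_ee 0, hsingle_min, hsingle_min]
      ext x
      simp only [Set.mem_inter_iff, Set.mem_singleton_iff, Set.mem_empty_iff_false, iff_false,
        not_and]
      rintro rfl h
      have := DFunLike.congr_fun h 0
      simp [ee_apply] at this
  constructor
  · -- vertex splittable
    rw [hI, ← hsum]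
    refine VertexSplittable.split 1 (Ideal.span ((mon K) '' B))
      (Ideal.span {mon K (ee 2 + ee 3)}) hvsB (VertexSplittable.principal _) ?_ ?_ ?_ ?_ ?_
    · intro a ha; rw [hmB] at ha
      rcases ha with rfl | ha
      · simp [ee_apply]
      · simp only [hB, Set.mem_singleton_iff] at ha; simp [ha, ee_apply]
    · intro a ha; rw [hsingle_min] at ha; simp at ha; simp [ha, ee_apply]
    · rw [Ideal.span_le]
      rintro x rfl
      rw [show ((mon K) '' B : Set (R K 4)) = (mon K) '' B from rfl]
      have : mon K (ee 2 + ee 3) ∈ Ideal.span ((mon K) '' B) := by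
        rw [mon_mem_span_iff]
        exact ⟨ee 2, by simp [hB], le_self_add⟩
      exact this
    · rw [hsum, hmA, hmD, hsingle_min, hA]
      ext x
      simp only [Set.mem_insert_iff, Set.mem_singleton_iff, Set.mem_union]
      tauto
    · rw [hmD, hsingle_min]
      ext x
      simp only [Set.mem_inter_iff, Set.mem_insert_iff, Set.mem_singleton_iff,
        Set.mem_empty_iff_false, iff_false, not_and]
      rintro (rfl | rfl) h <;>
      · have := DFunLike.congr_fun h 0
        simp [ee_apply] at this
        try (have := DFunLike.congr_fun h 1; simp [ee_apply] at this)
  · -- not matroidal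
    rintro ⟨⟨-, -, hex⟩, -⟩
    rw [hI, hmA] at hex
    have hu : (ee 0 + ee 1) ∈ A := by simp [hA]
    have hv : (ee 2 + ee 3) ∈ A := by simp [hA]
    have h10 : (ee 2 + ee 3) 1 < (ee 0 + ee 1) 1 := by simp [ee_apply]
    obtain ⟨j, hj, w, hw, hweq⟩ := hex _ hu _ hv 1 h10
    -- j must be 2 or 3
    fin_cases j <;> simp [ee_apply] at hj <;>
    · simp only [hA, Set.mem_insert_iff, Set.mem_singleton_iff] at hw
      rcases hw with rfl | rfl | rfl <;>
        first
          | (have := DFunLike.congr_fun hweq 0; simp [ee_apply] at this; done)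
          | (have := DFunLike.congr_fun hweq 1; simp [ee_apply] at this; done)
          | (have := DFunLike.congr_fun hweq 2; simp [ee_apply] at this; done)
          | (have := DFunLike.congr_fun hweq 3; simp [ee_apply] at this; done)


end Paper
end
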